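/- arXiv:2101.08544 — 2 statements merged into one kernel-verified Lean document; each statement's English description precedes it below -/
import Mathlib

section
/- For the kernel χ(t) = (1/4)·B̄₂(2te^{-2}) + (3/4)·B̄₂(2te): χ(1) = 0, ∑_{k∈ℤ} χ(e^{-k}u) = 1 for all u > 0, and ψ_χ⁻(u) = 3/4 for all u ∈ [1, e), where ψ_χ⁻(u) := ∑_{k > log u} χ(u e^{-k}). -/
open Real Filter Set MeasureTheory

noncomputable def expSamp (χ f : ℝ → ℝ) (w t : ℝ) : ℝ :=
  ∑' k : ℤ, χ (Real.exp (-(k : ℝ)) * t ^ w) * f (Real.exp ((k : ℝ) / w))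

noncomputable def psiMinus (χ : ℝ → ℝ) (u : ℝ) : ℝ :=
  ∑' k : ℤ, if Real.log u < (k : ℝ) then χ (u * Real.exp (-(k : ℝ))) else 0

noncomputable def psiPlus (χ : ℝ → ℝ) (u : ℝ) : ℝ :=
  ∑' k : ℤ, if (k : ℝ) < Real.log u then χ (u * Real.exp (-(k : ℝ))) else 0

/-- χ is a kernel: absolute summability, partition of unity, and a finite absolute
moment of some order ν > 0. -/
def IsKernel (χ : ℝ → ℝ) : Prop :=
  (∀ u : ℝ, 0 < u → Summable fun k : ℤ => |χ (Real.exp (-(k : ℝ)) * u)|) ∧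
  (∀ u : ℝ, 0 < u → HasSum (fun k : ℤ => χ (Real.exp (-(k : ℝ)) * u)) 1) ∧
  ∃ ν : ℝ, 0 < ν ∧ ∃ C : ℝ, ∀ u : ℝ, 0 < u →
    (Summable fun k : ℤ => |χ (Real.exp (-(k : ℝ)) * u)| * |(k : ℝ) - Real.log u| ^ ν) ∧
    ∑' k : ℤ, |χ (Real.exp (-(k : ℝ)) * u)| * |(k : ℝ) - Real.log u| ^ ν ≤ C

/-- Logarithmic modulus of continuity. -/
noncomputable def logMod (f : ℝ → ℝ) (δ : ℝ) : ℝ :=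
  sSup {d : ℝ | ∃ p q : ℝ, 0 < p ∧ 0 < q ∧ |Real.log p - Real.log q| ≤ δ ∧ d = |f p - f q|}

/-- Sup norm of a function on the positive reals. -/
noncomputable def supNormPos (f : ℝ → ℝ) : ℝ := ⨆ x : {x : ℝ // 0 < x}, |f x.1|

/-- Absolute moment of order ν of the kernel χ. -/
noncomputable def absMoment (χ : ℝ → ℝ) (ν : ℝ) : ℝ :=
  ⨆ u : {u : ℝ // 0 < u},
    ∑' k : ℤ, |χ (Real.exp (-(k : ℝ)) * u.1)| * |(k : ℝ) - Real.log u.1| ^ ν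

/-- log-uniform continuity on ℝ⁺. -/
def LogUniformCont (f : ℝ → ℝ) : Prop :=
  ∀ ε : ℝ, 0 < ε → ∃ δ : ℝ, 0 < δ ∧ ∀ p q : ℝ, 0 < p → 0 < q →
    |Real.log p - Real.log q| < δ → |f p - f q| < ε

/-- The second order Mellin B-spline. -/
noncomputable def mellinB2 (t : ℝ) : ℝ :=
  if 1 ≤ t ∧ t ≤ Real.exp 1 then 1 - Real.log t
  else if Real.exp (-1) ≤ t ∧ t < 1 then 1 + Real.log t
  else 0

/-- The triangular "hat" function in logarithmic coordinates. -/
noncomputable def hatFn (s : ℝ) : ℝ := if |s| ≤ 1 then 1 - |s| else 0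

lemma hatFn_eq_zero {s : ℝ} (h : 1 ≤ |s|) : hatFn s = 0 := by
  unfold hatFn
  split_ifs with h'
  · have : |s| = 1 := le_antisymm h' h
    rw [this]; ring
  · rfl

lemma mellinB2_pos_eq (t : ℝ) (ht : 0 < t) : mellinB2 t = hatFn (Real.log t) := by
  have e1 : 1 ≤ t ↔ 0 ≤ Real.log t := by
    constructor
    · exact Real.log_nonneg
    · intro h
      have := Real.exp_le_exp.2 h
      rwa [Real.exp_zero, Real.exp_log ht] at this
  have e2 : t ≤ Real.exp 1 ↔ Real.log t ≤ 1 := (Real.log_le_iff_le_exp ht).symm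
  have e3 : Real.exp (-1) ≤ t ↔ -1 ≤ Real.log t := (Real.le_log_iff_exp_le ht).symm
  have e4 : t < 1 ↔ Real.log t < 0 := (Real.log_neg_iff ht).symm
  unfold mellinB2 hatFn
  rcases le_or_gt 0 (Real.log t) with h0 | h0
  · rcases le_or_gt (Real.log t) 1 with h1 | h1
    · rw [if_pos ⟨e1.2 h0, e2.2 h1⟩, if_pos (by rw [abs_of_nonneg h0]; exact h1),
        abs_of_nonneg h0]
    · rw [if_neg (fun h => absurd (e2.1 h.2) (not_le.2 h1)),
        if_neg (fun h => absurd (e4.1 h.2) (not_lt.2 h0)),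
        if_neg (by rw [abs_of_nonneg h0]; exact not_le.2 h1)]
  · rcases le_or_gt (-1) (Real.log t) with h1 | h1
    · rw [if_neg (fun h => absurd (e1.1 h.1) (not_le.2 (by linarith))),
        if_pos ⟨e3.2 h1, e4.2 h0⟩, if_pos (by rw [abs_of_neg h0]; linarith),
        abs_of_neg h0]
      ring
    · rw [if_neg (fun h => absurd (e1.1 h.1) (not_le.2 (by linarith))),
        if_neg (fun h => absurd (e3.1 h.1) (not_le.2 h1)),
        if_neg (by rw [abs_of_neg h0]; intro h; linarith)]

lemma hasSum_hatFn (x : ℝ) : HasSum (fun k : ℤ => hatFn (x - k)) 1 := by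
  have hfl : (⌊x⌋ : ℝ) ≤ x := Int.floor_le x
  have hfu : x < ⌊x⌋ + 1 := Int.lt_floor_add_one x
  have hzero : ∀ k : ℤ, k ∉ ({⌊x⌋, ⌊x⌋ + 1} : Finset ℤ) → hatFn (x - k) = 0 := by
    intro k hk
    simp only [Finset.mem_insert, Finset.mem_singleton] at hk
    push_neg at hk
    have : k ≤ ⌊x⌋ - 1 ∨ ⌊x⌋ + 2 ≤ k := by omega
    apply hatFn_eq_zero
    rcases this with h | h
    · have : (k : ℝ) ≤ (⌊x⌋ : ℝ) - 1 := by exact_mod_cast h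
      rw [le_abs]; left; linarith
    · have : (⌊x⌋ : ℝ) + 2 ≤ (k : ℝ) := by exact_mod_cast h
      rw [le_abs]; right; linarith
  have hsum := hasSum_sum_of_ne_finset_zero (L := SummationFilter.unconditional ℤ) hzero
  have hne : (⌊x⌋ : ℤ) ≠ ⌊x⌋ + 1 := by omega
  rw [Finset.sum_pair hne] at hsum
  push_cast at hsum
  have h1 : hatFn (x - (⌊x⌋ : ℝ)) = 1 - (x - ⌊x⌋) := by
    unfold hatFn
    rw [if_pos (by rw [abs_of_nonneg (by linarith)]; linarith), abs_of_nonneg (by linarith)]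
  have h2 : hatFn (x - ((⌊x⌋ : ℝ) + 1)) = x - ⌊x⌋ := by
    unfold hatFn
    rw [if_pos (by rw [abs_of_nonpos (by linarith)]; linarith), abs_of_nonpos (by linarith)]
    ring
  rw [h1, h2] at hsum
  convert hsum using 1
  ring

lemma hasSum_mellinB2 (u : ℝ) (hu : 0 < u) :
    HasSum (fun k : ℤ => mellinB2 (Real.exp (-(k : ℝ)) * u)) 1 := by
  have h : ∀ k : ℤ, mellinB2 (Real.exp (-(k : ℝ)) * u) = hatFn (Real.log u - k) := by
    intro k
    rw [mellinB2_pos_eq _ (by positivity), Real.log_mul (Real.exp_ne_zero _) hu.ne',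
      Real.log_exp]
    congr 1; ring
  simp only [h]
  exact hasSum_hatFn (Real.log u)

lemma hatFn_three (x : ℝ) (h0 : 0 < x) (h2 : x < 2) :
    hatFn x + hatFn (x - 1) + hatFn (x - 2) = 1 := by
  rcases le_or_gt x 1 with h | h
  · have e1 : hatFn x = 1 - x := by
      unfold hatFn
      rw [if_pos (by rw [abs_of_nonneg h0.le]; exact h), abs_of_nonneg h0.le]
    have e2 : hatFn (x - 1) = x := by
      unfold hatFn
      rw [if_pos (by rw [abs_of_nonpos (by linarith)]; linarith), abs_of_nonpos (by linarith)]
      ring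
    have e3 : hatFn (x - 2) = 0 := hatFn_eq_zero (by rw [le_abs]; right; linarith)
    rw [e1, e2, e3]; ring
  · have e1 : hatFn x = 0 := hatFn_eq_zero (by rw [le_abs]; left; linarith)
    have e2 : hatFn (x - 1) = 1 - (x - 1) := by
      unfold hatFn
      rw [if_pos (by rw [abs_of_nonneg (by linarith)]; linarith), abs_of_nonneg (by linarith)]
    have e3 : hatFn (x - 2) = 1 + (x - 2) := by
      unfold hatFn
      rw [if_pos (by rw [abs_of_nonpos (by linarith)]; linarith), abs_of_nonpos (by linarith)]
      ring
    rw [e1, e2, e3]; ring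

lemma chi_hat (t : ℝ) (ht : 0 < t) :
    (1 / 4) * mellinB2 (2 * t * Real.exp (-2)) + (3 / 4) * mellinB2 (2 * t * Real.exp 1)
      = (1 / 4) * hatFn (Real.log 2 + Real.log t - 2)
        + (3 / 4) * hatFn (Real.log 2 + Real.log t + 1) := by
  rw [mellinB2_pos_eq _ (by positivity), mellinB2_pos_eq _ (by positivity),
    Real.log_mul (by positivity) (Real.exp_ne_zero _),
    Real.log_mul (by positivity) (Real.exp_ne_zero _),
    Real.log_mul two_ne_zero ht.ne', Real.log_exp, Real.log_exp]
  ring_nf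

/-- The combined Mellin B-spline kernel: χ(1) = 0, partition of unity, and ψ⁻ ≡ 3/4
on [1, e). -/
theorem stmt17 :
    let χ : ℝ → ℝ :=
      fun t => (1 / 4) * mellinB2 (2 * t * Real.exp (-2)) + (3 / 4) * mellinB2 (2 * t * Real.exp 1)
    χ 1 = 0 ∧
    (∀ u : ℝ, 0 < u → HasSum (fun k : ℤ => χ (Real.exp (-(k : ℝ)) * u)) 1) ∧
    (∀ u ∈ Set.Ico (1 : ℝ) (Real.exp 1), psiMinus χ u = 3 / 4) := by
  intro χ
  have hl2 : Real.log 2 < 0.6931471808 := Real.log_two_lt_d9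
  have hg2 : (0.6931471803 : ℝ) < Real.log 2 := Real.log_two_gt_d9
  refine ⟨?_, ?_, ?_⟩
  · show (1 / 4) * mellinB2 (2 * 1 * Real.exp (-2)) + (3 / 4) * mellinB2 (2 * 1 * Real.exp 1) = 0
    rw [chi_hat 1 one_pos, Real.log_one,
      hatFn_eq_zero (by rw [le_abs]; right; linarith),
      hatFn_eq_zero (by rw [le_abs]; left; linarith)]
    ring
  · intro u hu
    show HasSum (fun k : ℤ => (1 / 4) * mellinB2 (2 * (Real.exp (-(k : ℝ)) * u) * Real.exp (-2))
      + (3 / 4) * mellinB2 (2 * (Real.exp (-(k : ℝ)) * u) * Real.exp 1)) 1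
    have h1 := hasSum_mellinB2 (2 * u * Real.exp (-2)) (by positivity)
    have h2 := hasSum_mellinB2 (2 * u * Real.exp 1) (by positivity)
    have h := (h1.mul_left (1 / 4 : ℝ)).add (h2.mul_left (3 / 4 : ℝ))
    have harg1 : ∀ k : ℤ, Real.exp (-(k : ℝ)) * (2 * u * Real.exp (-2))
        = 2 * (Real.exp (-(k : ℝ)) * u) * Real.exp (-2) := fun k => by ring
    have harg2 : ∀ k : ℤ, Real.exp (-(k : ℝ)) * (2 * u * Real.exp 1)
        = 2 * (Real.exp (-(k : ℝ)) * u) * Real.exp 1 := fun k => by ring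
    simp only [harg1, harg2] at h
    have e : (1 / 4 * 1 + 3 / 4 * 1 : ℝ) = 1 := by norm_num
    rwa [e] at h
  · intro u hu
    obtain ⟨hu1, hu2⟩ := hu
    have hupos : (0 : ℝ) < u := lt_of_lt_of_le one_pos hu1
    have hy0 : 0 ≤ Real.log u := Real.log_nonneg hu1
    have hy1 : Real.log u < 1 := (Real.log_lt_iff_lt_exp hupos).2 hu2
    unfold psiMinus
    have hzero : ∀ k : ℤ, k ∉ ({1, 2, 3} : Finset ℤ) →
        (if Real.log u < (k : ℝ) then χ (u * Real.exp (-(k : ℝ))) else 0) = 0 := by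
      intro k hk
      simp only [Finset.mem_insert, Finset.mem_singleton] at hk
      push_neg at hk
      rcases le_or_gt k 0 with hk0 | hk0
      · rw [if_neg (not_lt.2 (le_trans (by exact_mod_cast hk0) hy0))]
      · have hk4 : 4 ≤ k := by omega
        have hk4' : (4 : ℝ) ≤ (k : ℝ) := by exact_mod_cast hk4
        have hA : χ (u * Real.exp (-(k : ℝ))) = 0 := by
          show (1 / 4) * mellinB2 (2 * (u * Real.exp (-(k : ℝ))) * Real.exp (-2))
            + (3 / 4) * mellinB2 (2 * (u * Real.exp (-(k : ℝ))) * Real.exp 1) = 0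
          rw [chi_hat _ (by positivity), Real.log_mul hupos.ne' (Real.exp_ne_zero _),
            Real.log_exp,
            hatFn_eq_zero (by rw [le_abs]; right; linarith),
            hatFn_eq_zero (by rw [le_abs]; right; linarith)]
          ring
        rw [hA, ite_self]
    rw [tsum_eq_sum hzero]
    have hval : ∀ k : ℤ, (1 : ℝ) ≤ (k : ℝ) →
        χ (u * Real.exp (-(k : ℝ)))
          = (3 / 4) * hatFn (Real.log 2 + Real.log u + 1 - (k : ℝ)) := by
      intro k hk
      show (1 / 4) * mellinB2 (2 * (u * Real.exp (-(k : ℝ))) * Real.exp (-2))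
        + (3 / 4) * mellinB2 (2 * (u * Real.exp (-(k : ℝ))) * Real.exp 1)
          = (3 / 4) * hatFn (Real.log 2 + Real.log u + 1 - (k : ℝ))
      rw [chi_hat _ (by positivity), Real.log_mul hupos.ne' (Real.exp_ne_zero _), Real.log_exp,
        hatFn_eq_zero (show (1 : ℝ) ≤ |Real.log 2 + (Real.log u + -(k : ℝ)) - 2| by
          rw [le_abs]; right; linarith),
        show Real.log 2 + (Real.log u + -(k : ℝ)) + 1 = Real.log 2 + Real.log u + 1 - (k : ℝ)
          from by ring]
      ring
    rw [Finset.sum_insert (by decide), Finset.sum_insert (by decide), Finset.sum_singleton,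
      if_pos (show Real.log u < ((1 : ℤ) : ℝ) by push_cast; linarith),
      if_pos (show Real.log u < ((2 : ℤ) : ℝ) by push_cast; linarith),
      if_pos (show Real.log u < ((3 : ℤ) : ℝ) by push_cast; linarith),
      hval 1 (by norm_num), hval 2 (by norm_num), hval 3 (by norm_num)]
    push_cast
    rw [show Real.log 2 + Real.log u + 1 - (1 : ℝ) = Real.log 2 + Real.log u from by ring,
      show Real.log 2 + Real.log u + 1 - (2 : ℝ) = Real.log 2 + Real.log u - 1 from by ring,
      show Real.log 2 + Real.log u + 1 - (3 : ℝ) = Real.log 2 + Real.log u - 2 from by ring]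
    linarith [hatFn_three (Real.log 2 + Real.log u) (by linarith) (by linarith)]
end

section
/- Let χ be a kernel with M₀(χ), M₁(χ) < ∞ and let f: ℝ⁺ → ℝ be bounded and log-uniformly continuous. Then for every δ > 0, w > 0 and t > 0: |(S_w^χ f)(t) - f(t)| ≤ M₀(χ)·ω(f, δ) + (ω(f, δ)/(wδ))·M₁(χ). -/
open Real Filter Set MeasureTheory

lemma logMod_mem_le (f : ℝ → ℝ) (B δ : ℝ) (hf : ∀ x : ℝ, 0 < x → |f x| ≤ B)
    {p q : ℝ} (hp : 0 < p) (hq : 0 < q)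
    (h : |Real.log p - Real.log q| ≤ δ) :
    |f p - f q| ≤ logMod f δ := by
  apply le_csSup
  · refine ⟨2 * B, ?_⟩
    rintro d ⟨p, q, hp, hq, -, rfl⟩
    calc |f p - f q| ≤ |f p| + |f q| := abs_sub _ _
      _ ≤ B + B := add_le_add (hf p hp) (hf q hq)
      _ = 2 * B := by ring
  · exact ⟨p, q, hp, hq, h, rfl⟩

lemma logMod_nonneg' (f : ℝ → ℝ) (B δ : ℝ) (hf : ∀ x : ℝ, 0 < x → |f x| ≤ B)
    (hδ : 0 ≤ δ) : 0 ≤ logMod f δ := by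
  have := logMod_mem_le f B δ hf one_pos one_pos (by simp [hδ])
  simpa using this

lemma chain_aux (f : ℝ → ℝ) (ω δ : ℝ)
    (hstep : ∀ p q : ℝ, 0 < p → 0 < q → |Real.log p - Real.log q| ≤ δ → |f p - f q| ≤ ω) :
    ∀ n : ℕ, ∀ p q : ℝ, 0 < p → 0 < q → |Real.log p - Real.log q| ≤ n * δ →
      |f p - f q| ≤ n * ω := by
  intro n
  induction n with
  | zero =>
    intro p q hp hq h
    simp only [Nat.cast_zero, zero_mul] at h ⊢
    have h0 : Real.log p = Real.log q := by
      have h1 : |Real.log p - Real.log q| = 0 := le_antisymm h (abs_nonneg _)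
      linarith [sub_eq_zero.mp (abs_eq_zero.mp h1)]
    have : p = q := Real.log_injOn_pos (Set.mem_Ioi.mpr hp) (Set.mem_Ioi.mpr hq) h0
    simp [this]
  | succ n ih =>
    intro p q hp hq h
    set r : ℝ := Real.exp (Real.log p + (Real.log q - Real.log p) * (n / (n + 1))) with hr
    have hrpos : 0 < r := Real.exp_pos _
    have hlr : Real.log r = Real.log p + (Real.log q - Real.log p) * (n / (n + 1)) :=
      Real.log_exp _
    have h1 : |Real.log p - Real.log r| ≤ n * δ := by
      rw [hlr]
      have he : Real.log p - (Real.log p + (Real.log q - Real.log p) * (n / (n + 1)))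
          = (Real.log p - Real.log q) * (n / (n + 1)) := by ring
      rw [he, abs_mul, abs_of_nonneg (by positivity : (0:ℝ) ≤ (n:ℝ) / (n + 1))]
      calc |Real.log p - Real.log q| * (n / (n + 1))
          ≤ ((n + 1) * δ) * (n / (n + 1)) := by
            apply mul_le_mul_of_nonneg_right _ (by positivity)
            simpa [Nat.cast_succ] using h
        _ = n * δ := by field_simp
    have h2 : |Real.log r - Real.log q| ≤ δ := by
      rw [hlr]
      have he : Real.log p + (Real.log q - Real.log p) * (n / (n + 1)) - Real.log q
          = (Real.log p - Real.log q) * (1 / (n + 1)) := by field_simp; ring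
      rw [he, abs_mul, abs_of_nonneg (by positivity : (0:ℝ) ≤ 1 / ((n:ℝ) + 1))]
      calc |Real.log p - Real.log q| * (1 / (n + 1))
          ≤ ((n + 1) * δ) * (1 / (n + 1)) := by
            apply mul_le_mul_of_nonneg_right _ (by positivity)
            simpa [Nat.cast_succ] using h
        _ = δ := by field_simp
    calc |f p - f q| ≤ |f p - f r| + |f r - f q| := abs_sub_le _ _ _
      _ ≤ n * ω + ω := add_le_add (ih p r hp hrpos h1) (hstep r q hrpos hq h2)
      _ = (n + 1 : ℕ) * ω := by push_cast; ring

lemma chain_main (f : ℝ → ℝ) (ω δ : ℝ) (hω : 0 ≤ ω) (hδ : 0 < δ)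
    (hstep : ∀ p q : ℝ, 0 < p → 0 < q → |Real.log p - Real.log q| ≤ δ → |f p - f q| ≤ ω)
    {p q : ℝ} (hp : 0 < p) (hq : 0 < q) :
    |f p - f q| ≤ ω * (1 + |Real.log p - Real.log q| / δ) := by
  set L := |Real.log p - Real.log q| with hL
  have hL0 : 0 ≤ L := abs_nonneg _
  set n := ⌈L / δ⌉₊ with hn
  have h1 : L ≤ n * δ := by
    rw [← div_le_iff₀ hδ] at *
    exact Nat.le_ceil _
  have h2 : (n : ℝ) ≤ L / δ + 1 := (Nat.ceil_lt_add_one (by positivity)).le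
  calc |f p - f q| ≤ n * ω := chain_aux f ω δ hstep n p q hp hq h1
    _ ≤ (L / δ + 1) * ω := mul_le_mul_of_nonneg_right h2 hω
    _ = ω * (1 + L / δ) := by ring



/-- Basic approximation estimate via the logarithmic modulus of continuity. -/
theorem stmt18 (χ f : ℝ → ℝ)
    (hχ1 : ∀ u : ℝ, 0 < u → HasSum (fun k : ℤ => χ (Real.exp (-(k : ℝ)) * u)) 1)
    (hs0 : ∀ u : ℝ, 0 < u → Summable fun k : ℤ => |χ (Real.exp (-(k : ℝ)) * u)|)
    (hs1 : ∀ u : ℝ, 0 < u →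
      Summable fun k : ℤ => |χ (Real.exp (-(k : ℝ)) * u)| * |(k : ℝ) - Real.log u| ^ (1 : ℝ))
    (hb0 : BddAbove (Set.range fun u : {u : ℝ // 0 < u} =>
      ∑' k : ℤ, |χ (Real.exp (-(k : ℝ)) * u.1)| * |(k : ℝ) - Real.log u.1| ^ (0 : ℝ)))
    (hb1 : BddAbove (Set.range fun u : {u : ℝ // 0 < u} =>
      ∑' k : ℤ, |χ (Real.exp (-(k : ℝ)) * u.1)| * |(k : ℝ) - Real.log u.1| ^ (1 : ℝ)))
    (B : ℝ) (hf : ∀ x : ℝ, 0 < x → |f x| ≤ B) (hfc : LogUniformCont f) :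
    ∀ δ : ℝ, 0 < δ → ∀ w : ℝ, 0 < w → ∀ t : ℝ, 0 < t →
      |expSamp χ f w t - f t| ≤
        absMoment χ 0 * logMod f δ + logMod f δ / (w * δ) * absMoment χ 1 := by
  intro δ hδ w hw t ht
  set ω := logMod f δ with hωdef
  have hω0 : 0 ≤ ω := logMod_nonneg' f B δ hf hδ.le
  have hstep : ∀ p q : ℝ, 0 < p → 0 < q → |Real.log p - Real.log q| ≤ δ → |f p - f q| ≤ ω :=
    fun p q hp hq h => logMod_mem_le f B δ hf hp hq h
  set u := t ^ w with hu
  have hu0 : 0 < u := Real.rpow_pos_of_pos ht w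
  have hlogu : Real.log u = w * Real.log t := Real.log_rpow ht w
  set c := ω / (w * δ) with hc
  have hc0 : 0 ≤ c := by positivity
  set g : ℤ → ℝ := fun k => f (Real.exp ((k : ℝ) / w)) with hg
  set a : ℤ → ℝ := fun k => χ (Real.exp (-(k : ℝ)) * u) with ha
  -- per-term estimate
  have key : ∀ k : ℤ, |g k - f t| ≤ ω + c * |(k : ℝ) - Real.log u| := by
    intro k
    have h1 := chain_main f ω δ hω0 hδ hstep (Real.exp_pos ((k : ℝ) / w)) ht
    rw [Real.log_exp] at h1
    have h2 : |(k : ℝ) / w - Real.log t| = |(k : ℝ) - Real.log u| / w := by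
      rw [hlogu, show (k : ℝ) / w - Real.log t = ((k : ℝ) - w * Real.log t) / w by
        field_simp, abs_div, abs_of_pos hw]
    refine h1.trans_eq ?_
    rw [h2, hc]
    field_simp
  -- summability
  have A0 : Summable fun k : ℤ => |a k| := hs0 u hu0
  have A1 : Summable fun k : ℤ => |a k| * |(k : ℝ) - Real.log u| := by
    simpa [Real.rpow_one] using hs1 u hu0
  have hM : Summable fun k : ℤ => ω * |a k| + c * (|a k| * |(k : ℝ) - Real.log u|) :=
    (A0.mul_left ω).add (A1.mul_left c)
  have habs : ∀ k : ℤ, |a k * (g k - f t)| ≤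
      ω * |a k| + c * (|a k| * |(k : ℝ) - Real.log u|) := by
    intro k
    rw [abs_mul]
    calc |a k| * |g k - f t| ≤ |a k| * (ω + c * |(k : ℝ) - Real.log u|) :=
          mul_le_mul_of_nonneg_left (key k) (abs_nonneg _)
      _ = ω * |a k| + c * (|a k| * |(k : ℝ) - Real.log u|) := by ring
  have hSd : Summable fun k : ℤ => |a k * (g k - f t)| :=
    Summable.of_nonneg_of_le (fun k => abs_nonneg _) habs hM
  have hSg : Summable fun k : ℤ => a k * (g k - f t) := hSd.of_abs
  -- rewrite the difference
  have hHs1 : HasSum a 1 := hχ1 u hu0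
  have hSag : Summable fun k : ℤ => a k * g k := by
    have hB0 : Summable fun k : ℤ => |a k| * B := A0.mul_right B
    have : Summable fun k : ℤ => |a k * g k| :=
      Summable.of_nonneg_of_le (fun k => abs_nonneg _)
        (fun k => by
          rw [abs_mul]
          exact mul_le_mul_of_nonneg_left (hf _ (Real.exp_pos _)) (abs_nonneg _)) hB0
    exact this.of_abs
  have hft : HasSum (fun k : ℤ => a k * f t) (f t) := by
    simpa using hHs1.mul_right (f t)
  have hdiff : expSamp χ f w t - f t = ∑' k : ℤ, a k * (g k - f t) := by
    have h3 : HasSum (fun k : ℤ => a k * (g k - f t)) ((∑' k : ℤ, a k * g k) - f t) := by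
      simpa [mul_sub] using hSag.hasSum.sub hft
    rw [h3.tsum_eq, expSamp]
  rw [hdiff]
  -- the two sums
  have hS0le : (∑' k : ℤ, |a k|) ≤ absMoment χ 0 := by
    have e0 := le_ciSup hb0 (⟨u, hu0⟩ : {u : ℝ // 0 < u})
    calc (∑' k : ℤ, |a k|)
        = ∑' k : ℤ, |a k| * |(k : ℝ) - Real.log u| ^ (0 : ℝ) := by
          simp [Real.rpow_zero]
      _ ≤ absMoment χ 0 := e0
  have hS1le : (∑' k : ℤ, |a k| * |(k : ℝ) - Real.log u|) ≤ absMoment χ 1 := by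
    have e1 := le_ciSup hb1 (⟨u, hu0⟩ : {u : ℝ // 0 < u})
    calc (∑' k : ℤ, |a k| * |(k : ℝ) - Real.log u|)
        = ∑' k : ℤ, |a k| * |(k : ℝ) - Real.log u| ^ (1 : ℝ) := by
          simp [Real.rpow_one]
      _ ≤ absMoment χ 1 := e1
  have hstart : |∑' k : ℤ, a k * (g k - f t)| ≤ ∑' k : ℤ, |a k * (g k - f t)| := by
    have h := norm_tsum_le_tsum_norm (f := fun k : ℤ => a k * (g k - f t)) hSd
    simp only [Real.norm_eq_abs] at h
    exact h
  calc |∑' k : ℤ, a k * (g k - f t)|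
      ≤ ∑' k : ℤ, |a k * (g k - f t)| := hstart
    _ ≤ ∑' k : ℤ, (ω * |a k| + c * (|a k| * |(k : ℝ) - Real.log u|)) :=
        Summable.tsum_le_tsum habs hSd hM
    _ = ω * (∑' k : ℤ, |a k|) + c * ∑' k : ℤ, |a k| * |(k : ℝ) - Real.log u| := by
        rw [Summable.tsum_add (A0.mul_left ω) (A1.mul_left c), tsum_mul_left, tsum_mul_left]
    _ ≤ absMoment χ 0 * ω + c * absMoment χ 1 := by
        have e0 := mul_le_mul_of_nonneg_left hS0le hω0
        have e1 := mul_le_mul_of_nonneg_left hS1le hc0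
        linarith
end
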